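/- Let x, x' ∈ Σ_q^n with supp(x−x') = {i_1 < i_2 < ⋯ < i_d}, d ≥ 2; let 0 = j_0 < j_1 < ⋯ < j_m = n be the right endpoints of the runs of x and 0 = j'_0 < j'_1 < ⋯ < j'_{m'} = n the right endpoints of the runs of x'. For any i ∈ [m] and i' ∈ [m'] with supp(x−x') ∩ [min(j_i, j'_{i'}), max(j_i, j'_{i'})] = ∅, one has d_H(x_{[n]∖{j_i}}, x'_{[n]∖{j'_{i'}}}) = d if and only if j_i = j'_{i'}. Consequently, the number of pairs (j_i, j'_{i'}) satisfying this emptiness condition together with d_H(x_{[n]∖{j_i}}, x'_{[n]∖{j'_{i'}}}) = d is at most n − d. -/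

import Mathlib

/-- Sequences of length `n` are modelled as functions `ℕ → Fin q` whose relevant
positions are `1, …, n` (1-based, as in the paper). `delN x j` deletes position `j`. -/
def delN {q : ℕ} (x : ℕ → Fin q) (j : ℕ) : ℕ → Fin q :=
  fun i => if i < j then x i else x (i + 1)

/-- Hamming distance between two length-`n` sequences (positions `1, …, n`). -/
def hdist {q : ℕ} (n : ℕ) (u v : ℕ → Fin q) : ℕ :=
  ((Finset.Icc 1 n).filter fun i => u i ≠ v i).card

/-- `j 0 = 0 < j 1 < ⋯ < j m = n` are the right endpoints of the runs of `x`. -/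
def IsRunDecomp {q : ℕ} (n m : ℕ) (x : ℕ → Fin q) (j : ℕ → ℕ) : Prop :=
  j 0 = 0 ∧ j m = n ∧ (∀ i, i < m → j i < j (i + 1)) ∧
  (∀ i, 1 ≤ i → i ≤ m → ∀ a b, j (i - 1) + 1 ≤ a → a ≤ j i →
      j (i - 1) + 1 ≤ b → b ≤ j i → x a = x b) ∧
  (∀ i, 1 ≤ i → i < m → x (j i) ≠ x (j i + 1))

lemma jmono {j : ℕ → ℕ} {m : ℕ} (h : ∀ i, i < m → j i < j (i + 1)) :
    ∀ a b, a < b → b ≤ m → j a < j b := by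
  intro a b hab hbm
  induction b with
  | zero => omega
  | succ b ih =>
    rcases Nat.lt_succ_iff_lt_or_eq.mp hab with h' | h'
    · exact lt_trans (ih h' (by omega)) (h b (by omega))
    · subst h'; exact h a (by omega)

lemma hdist_symm {q n : ℕ} (u v : ℕ → Fin q) : hdist n u v = hdist n v u := by
  unfold hdist
  congr 1
  apply Finset.filter_congr
  intro i _
  simp [ne_comm]

lemma hdist_eq_del {q n : ℕ} (x x' : ℕ → Fin q) (t : ℕ)
    (ht1 : 1 ≤ t) (ht2 : t ≤ n) (hxt : x t = x' t) :
    hdist (n - 1) (delN x t) (delN x' t)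
      = ((Finset.Icc 1 n).filter fun k => x k ≠ x' k).card := by
  unfold hdist
  apply Finset.card_bij' (fun k _ => if k < t then k else k + 1)
    (fun a _ => if a < t then a else a - 1)
  · intro k hk
    simp only [Finset.mem_filter, Finset.mem_Icc] at hk ⊢
    simp only [delN] at hk ⊢
    split_ifs with h
    · refine ⟨⟨by omega, by omega⟩, ?_⟩
      simpa [delN, h] using hk.2
    · refine ⟨⟨by omega, by omega⟩, ?_⟩
      have := hk.2
      simp only [if_neg h, if_neg (show ¬ k < t from h)] at this
      simpa using this
  · intro a ha
    simp only [Finset.mem_filter, Finset.mem_Icc] at ha ⊢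
    have hat : a ≠ t := by
      rintro rfl; exact ha.2 hxt
    split_ifs with h
    · refine ⟨⟨by omega, by omega⟩, ?_⟩
      simp only [delN, if_pos h]
      exact ha.2
    · refine ⟨⟨by omega, by omega⟩, ?_⟩
      have h' : ¬ (a - 1 < t) := by omega
      simp only [delN, if_neg h']
      have : a - 1 + 1 = a := by omega
      rw [this]; exact ha.2
  · intro k hk
    split_ifs with h h2 h3 <;> omega
  · intro a ha
    simp only [Finset.mem_filter, Finset.mem_Icc] at ha
    have hat : a ≠ t := by rintro rfl; exact ha.2 hxt
    split_ifs with h h2 h3 <;> omega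

lemma hdist_ne_del {q n d : ℕ} (x x' : ℕ → Fin q) (t t' : ℕ)
    (htt : t < t') (ht1 : 1 ≤ t) (ht2 : t' ≤ n)
    (hrun : x t ≠ x (t + 1))
    (heq : ∀ a, t ≤ a → a ≤ t' → x a = x' a)
    (hsupp : ((Finset.Icc 1 n).filter fun k => x k ≠ x' k).card = d) :
    d + 1 ≤ hdist (n - 1) (delN x t) (delN x' t') := by
  classical
  have htnot : t ∉ (Finset.Icc 1 n).filter fun k => x k ≠ x' k := by
    simp only [Finset.mem_filter, Finset.mem_Icc, not_and]
    intro _ h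
    exact h (heq t le_rfl (le_of_lt htt))
  have hcardS : (insert t ((Finset.Icc 1 n).filter fun k => x k ≠ x' k)).card = d + 1 := by
    rw [Finset.card_insert_of_notMem htnot, hsupp]
  rw [← hcardS]
  unfold hdist
  have hloc : ∀ a ∈ insert t ((Finset.Icc 1 n).filter fun k => x k ≠ x' k),
      a = t ∨ (1 ≤ a ∧ a ≤ n ∧ x a ≠ x' a ∧ (a < t ∨ t' < a)) := by
    intro a ha
    rcases Finset.mem_insert.mp ha with h | h
    · exact Or.inl h
    · simp only [Finset.mem_filter, Finset.mem_Icc] at h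
      right
      refine ⟨h.1.1, h.1.2, h.2, ?_⟩
      by_contra hc
      push_neg at hc
      exact h.2 (heq a (by omega) (by omega))
  apply Finset.card_le_card_of_injOn (fun a => if a ≤ t then a else a - 1)
  · intro a ha
    rcases hloc a ha with h | ⟨ha1, han, hne, hout⟩
    · subst h
      simp only [Finset.mem_coe, Finset.mem_filter, Finset.mem_Icc, if_pos le_rfl]
      refine ⟨⟨ht1, by omega⟩, ?_⟩
      have h1 : delN x a a = x (a + 1) := by simp [delN]
      have h2 : delN x' t' a = x' a := by simp [delN, htt]
      rw [h1, h2, ← heq a le_rfl (le_of_lt htt)]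
      exact fun h => hrun h.symm
    · rcases hout with h | h
      · simp only [Finset.mem_coe, Finset.mem_filter, Finset.mem_Icc, if_pos (le_of_lt h)]
        refine ⟨⟨ha1, by omega⟩, ?_⟩
        simpa [delN, h, lt_trans h htt] using hne
      · have h' : ¬ a ≤ t := by omega
        simp only [Finset.mem_coe, Finset.mem_filter, Finset.mem_Icc, if_neg h']
        refine ⟨⟨by omega, by omega⟩, ?_⟩
        have e1 : delN x t (a - 1) = x a := by
          simp only [delN, if_neg (show ¬ a - 1 < t by omega)]
          congr 1; omega
        have e2 : delN x' t' (a - 1) = x' a := by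
          simp only [delN, if_neg (show ¬ a - 1 < t' by omega)]
          congr 1; omega
        rw [e1, e2]; exact hne
  · intro a ha b hb hab
    have h1 := hloc a ha
    have h2 := hloc b hb
    simp only at hab
    split_ifs at hab <;> omega

/-- For run endpoints `j_i` of `x` and `j'_{i'}` of `x'` with
`supp(x − x') ∩ [min(j_i, j'_{i'}), max(j_i, j'_{i'})] = ∅`, the deleted sequences are
at Hamming distance exactly `d = |supp(x − x')|` iff `j_i = j'_{i'}`; consequently at
most `n − d` pairs `(j_i, j'_{i'})` satisfy the emptiness condition together with
`d_H(x_{[n]∖{j_i}}, x'_{[n]∖{j'_{i'}}}) = d`. -/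
theorem stmt11 (q n m m' d : ℕ) (hq : 2 ≤ q) (hd : 2 ≤ d)
    (x x' : ℕ → Fin q)
    (hsupp : ((Finset.Icc 1 n).filter fun k => x k ≠ x' k).card = d)
    (j j' : ℕ → ℕ)
    (hx : IsRunDecomp n m x j) (hx' : IsRunDecomp n m' x' j') :
    (∀ i i', 1 ≤ i → i ≤ m → 1 ≤ i' → i' ≤ m' →
      ((Finset.Icc 1 n).filter fun k => x k ≠ x' k) ∩
          Finset.Icc (min (j i) (j' i')) (max (j i) (j' i')) = ∅ →
      (hdist (n - 1) (delN x (j i)) (delN x' (j' i')) = d ↔ j i = j' i')) ∧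
    ((Finset.Icc 1 m ×ˢ Finset.Icc 1 m').filter fun p =>
        (((Finset.Icc 1 n).filter fun k => x k ≠ x' k) ∩
          Finset.Icc (min (j p.1) (j' p.2)) (max (j p.1) (j' p.2)) = ∅) ∧
        hdist (n - 1) (delN x (j p.1)) (delN x' (j' p.2)) = d).card ≤ n - d := by
  classical
  obtain ⟨hj0, hjm, hjlt, hjrun, hjend⟩ := hx
  obtain ⟨hj'0, hj'm, hj'lt, hj'run, hj'end⟩ := hx'
  -- basic bounds
  have hjpos : ∀ i, 1 ≤ i → i ≤ m → 1 ≤ j i := fun i h1 h2 => by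
    have := jmono hjlt 0 i (by omega) h2; omega
  have hjle : ∀ i, i ≤ m → j i ≤ n := fun i h2 => by
    rcases eq_or_lt_of_le h2 with rfl | h
    · omega
    · have := jmono hjlt i m h (le_refl m); omega
  have hj'pos : ∀ i, 1 ≤ i → i ≤ m' → 1 ≤ j' i := fun i h1 h2 => by
    have := jmono hj'lt 0 i (by omega) h2; omega
  have hj'le : ∀ i, i ≤ m' → j' i ≤ n := fun i h2 => by
    rcases eq_or_lt_of_le h2 with rfl | h
    · omega
    · have := jmono hj'lt i m' h (le_refl m'); omega
  have hsupp' : ((Finset.Icc 1 n).filter fun k => x' k ≠ x k).card = d := by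
    rw [← hsupp]
    congr 1
    apply Finset.filter_congr
    intro k _
    simp [ne_comm]
  have part1 : ∀ i i', 1 ≤ i → i ≤ m → 1 ≤ i' → i' ≤ m' →
      ((Finset.Icc 1 n).filter fun k => x k ≠ x' k) ∩
          Finset.Icc (min (j i) (j' i')) (max (j i) (j' i')) = ∅ →
      (hdist (n - 1) (delN x (j i)) (delN x' (j' i')) = d ↔ j i = j' i') := by
    intro i i' hi1 him hi'1 hi'm hempty
    have hti : 1 ≤ j i := hjpos i hi1 him
    have htin : j i ≤ n := hjle i him
    have hti' : 1 ≤ j' i' := hj'pos i' hi'1 hi'm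
    have hti'n : j' i' ≤ n := hj'le i' hi'm
    have heq : ∀ a, min (j i) (j' i') ≤ a → a ≤ max (j i) (j' i') → x a = x' a := by
      intro a h1 h2
      by_contra hne
      have : a ∈ ((Finset.Icc 1 n).filter fun k => x k ≠ x' k) ∩
          Finset.Icc (min (j i) (j' i')) (max (j i) (j' i')) := by
        simp only [Finset.mem_inter, Finset.mem_filter, Finset.mem_Icc]
        exact ⟨⟨⟨by omega, by omega⟩, hne⟩, h1, h2⟩
      rw [hempty] at this
      exact absurd this (Finset.notMem_empty a)
    constructor
    · intro hdd
      by_contra hne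
      rcases Nat.lt_or_ge (j i) (j' i') with hlt | hge
      · have him' : i < m := by
          rcases eq_or_lt_of_le him with rfl | h
          · omega
          · exact h
        have hb := hdist_ne_del x x' (j i) (j' i') hlt hti hti'n
          (hjend i hi1 him')
          (fun a h1 h2 => heq a (by omega) (by omega)) hsupp
        omega
      · have hlt : j' i' < j i := by omega
        have him' : i' < m' := by
          rcases eq_or_lt_of_le hi'm with rfl | h
          · omega
          · exact h
        have hb := hdist_ne_del x' x (j' i') (j i) hlt hti' htin
          (hj'end i' hi'1 him')
          (fun a h1 h2 => (heq a (by omega) (by omega)).symm) hsupp'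
        rw [hdist_symm] at hb
        omega
    · intro he
      rw [he]
      rw [hdist_eq_del x x' (j' i') hti' hti'n
        (heq (j' i') (by omega) (by omega)), hsupp]
  refine ⟨part1, ?_⟩
  have hsub : ((Finset.Icc 1 n).filter fun k => x k ≠ x' k) ⊆ Finset.Icc 1 n :=
    Finset.filter_subset _ _
  have hcard : ((Finset.Icc 1 n) \ ((Finset.Icc 1 n).filter fun k => x k ≠ x' k)).card
      = n - d := by
    rw [Finset.card_sdiff_of_subset hsub, hsupp, Nat.card_Icc]
    omega
  rw [← hcard]
  apply Finset.card_le_card_of_injOn (fun p => j p.1)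
  · intro p hp
    simp only [Finset.mem_coe, Finset.mem_filter, Finset.mem_product, Finset.mem_Icc] at hp
    obtain ⟨⟨⟨hp1, hpm⟩, hp'1, hp'm⟩, hemp, hdd⟩ := hp
    have hje : j p.1 = j' p.2 := (part1 p.1 p.2 hp1 hpm hp'1 hp'm hemp).mp hdd
    simp only [Finset.mem_coe, Finset.mem_sdiff, Finset.mem_Icc, Finset.mem_filter, not_and]
    refine ⟨⟨hjpos p.1 hp1 hpm, hjle p.1 hpm⟩, ?_⟩
    intro hmem hne
    have : j p.1 ∈ ((Finset.Icc 1 n).filter fun k => x k ≠ x' k) ∩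
        Finset.Icc (min (j p.1) (j' p.2)) (max (j p.1) (j' p.2)) := by
      simp only [Finset.mem_inter, Finset.mem_filter, Finset.mem_Icc, ← hje]
      exact ⟨⟨hmem, hne⟩, by omega, by omega⟩
    rw [hemp] at this
    exact absurd this (Finset.notMem_empty _)
  · intro p hp r hr hpr
    simp only [Finset.coe_filter, Set.mem_setOf_eq, Finset.mem_product, Finset.mem_Icc] at hp hr
    obtain ⟨⟨⟨hp1, hpm⟩, hp'1, hp'm⟩, hempp, hddp⟩ := hp
    obtain ⟨⟨⟨hr1, hrm⟩, hr'1, hr'm⟩, hempr, hddr⟩ := hr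
    simp only at hpr
    have h1 : p.1 = r.1 := by
      rcases Nat.lt_trichotomy p.1 r.1 with h | h | h
      · have := jmono hjlt p.1 r.1 h hrm; omega
      · exact h
      · have := jmono hjlt r.1 p.1 h hpm; omega
    have hjep : j p.1 = j' p.2 := (part1 p.1 p.2 hp1 hpm hp'1 hp'm hempp).mp hddp
    have hjer : j r.1 = j' r.2 := (part1 r.1 r.2 hr1 hrm hr'1 hr'm hempr).mp hddr
    have h2 : p.2 = r.2 := by
      have hj'eq : j' p.2 = j' r.2 := by omega
      rcases Nat.lt_trichotomy p.2 r.2 with h | h | h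
      · have := jmono hj'lt p.2 r.2 h hr'm; omega
      · exact h
      · have := jmono hj'lt r.2 p.2 h hp'm; omega
    exact Prod.ext h1 h2
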